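/- Define A, B, C, D : ℝ⁴ → ℝ as the 2-HEA amplitudes A := cos t₀ cos t₂ cos(t₁+t₃) − sin t₀ sin t₂ sin(t₁−t₃), B := cos t₀ cos t₂ sin(t₁+t₃) − sin t₀ sin t₂ cos(t₁−t₃), C := cos t₀ sin t₂ cos(t₁+t₃) + sin t₀ cos t₂ sin(t₁−t₃), D := sin t₀ cos t₂ cos(t₁−t₃) + cos t₀ sin t₂ sin(t₁+t₃); set x := A² + B², z := −(A·C + B·D), 𝒞 := 2√(x(1−x) − z²), and define the 4×4 matrix-valued function F with entries F_{ij} := 4·∂_i x·∂_j x + 4·∂_i z·∂_j z + ∂_i 𝒞·∂_j 𝒞 (partial derivatives in the parameters (t₀,t₁,t₂,t₃)). Then at the point θ* := (π/4, 0, π/4, 0): x(θ*) = 1/2 and z(θ*) = 0 (so the reduced state is ρ_A(θ*) = I/2), F(θ*) = diag(4, 4, 0, 0), and det F(θ*) = 0. -/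

import Mathlib

/-- Partial derivative of a real-valued map on `ℝ⁴` in the `i`-th coordinate direction. -/
noncomputable def pderiv4 (f : (Fin 4 → ℝ) → ℝ) (θ : Fin 4 → ℝ) (i : Fin 4) : ℝ :=
  fderiv ℝ f θ (Pi.single i 1)

/-- 2-HEA amplitudes. -/
noncomputable def heaA (t : Fin 4 → ℝ) : ℝ :=
  Real.cos (t 0) * Real.cos (t 2) * Real.cos (t 1 + t 3)
    - Real.sin (t 0) * Real.sin (t 2) * Real.sin (t 1 - t 3)

noncomputable def heaB (t : Fin 4 → ℝ) : ℝ :=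
  Real.cos (t 0) * Real.cos (t 2) * Real.sin (t 1 + t 3)
    - Real.sin (t 0) * Real.sin (t 2) * Real.cos (t 1 - t 3)

noncomputable def heaC (t : Fin 4 → ℝ) : ℝ :=
  Real.cos (t 0) * Real.sin (t 2) * Real.cos (t 1 + t 3)
    + Real.sin (t 0) * Real.cos (t 2) * Real.sin (t 1 - t 3)

noncomputable def heaD (t : Fin 4 → ℝ) : ℝ :=
  Real.sin (t 0) * Real.cos (t 2) * Real.cos (t 1 - t 3)
    + Real.cos (t 0) * Real.sin (t 2) * Real.sin (t 1 + t 3)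

/-- Reduced-state population `x = A² + B²`. -/
noncomputable def heaX (t : Fin 4 → ℝ) : ℝ := heaA t ^ 2 + heaB t ^ 2

/-- Reduced-state coherence `z = −(AC + BD)` (real for the 2-HEA). -/
noncomputable def heaZ (t : Fin 4 → ℝ) : ℝ := -(heaA t * heaC t + heaB t * heaD t)

/-- Concurrence `𝒞 = 2√(x(1−x) − z²)`. -/
noncomputable def heaConc (t : Fin 4 → ℝ) : ℝ :=
  2 * Real.sqrt (heaX t * (1 - heaX t) - heaZ t ^ 2)

/-- Three-channel SLD quantum Fisher information matrix of the 2-HEA on parameter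
space: `F_{ij} = 4 ∂_i x ∂_j x + 4 ∂_i z ∂_j z + ∂_i 𝒞 ∂_j 𝒞`. -/
noncomputable def heaQFIM (θ : Fin 4 → ℝ) : Matrix (Fin 4) (Fin 4) ℝ :=
  Matrix.of fun i j =>
    4 * pderiv4 heaX θ i * pderiv4 heaX θ j
      + 4 * pderiv4 heaZ θ i * pderiv4 heaZ θ j
      + pderiv4 heaConc θ i * pderiv4 heaConc θ j


section HEAaux

/-- Coordinate projection on `ℝ⁴` as a continuous linear map. -/
noncomputable def heaPj (i : Fin 4) : ((Fin 4 → ℝ) →L[ℝ] ℝ) := ContinuousLinearMap.proj i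

theorem heaHpj (i : Fin 4) (t : Fin 4 → ℝ) :
    HasFDerivAt (fun t : Fin 4 → ℝ => t i) (heaPj i) t := hasFDerivAt_apply i t

theorem HasFDerivAt.sq' {E : Type*} [NormedAddCommGroup E] [NormedSpace ℝ E]
    {f : E → ℝ} {f' : E →L[ℝ] ℝ} {x : E} (h : HasFDerivAt f f' x) :
    HasFDerivAt (fun t => f t ^ 2) ((2 * f x) • f') x := by
  have e : (2 * f x) • f' = f x • f' + f x • f' := by rw [two_mul, add_smul]
  rw [e]
  have h2 := h.mul h
  simp only [pow_two]
  exact h2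

end HEAaux

set_option maxHeartbeats 2000000

/-- A concrete singular point of the 2-HEA: at `θ* = (π/4, 0, π/4, 0)` the reduced
state is `ρ_A = I/2`, and the QFIM degenerates to `diag(4, 4, 0, 0)` with
`det F(θ*) = 0`. -/
theorem hea_singular_point :
    let θs : Fin 4 → ℝ := ![Real.pi / 4, 0, Real.pi / 4, 0]
    heaX θs = 1 / 2 ∧ heaZ θs = 0 ∧
    (!![heaX θs, heaZ θs; heaZ θs, 1 - heaX θs] : Matrix (Fin 2) (Fin 2) ℝ)
      = (1 / 2 : ℝ) • (1 : Matrix (Fin 2) (Fin 2) ℝ) ∧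
    heaQFIM θs = Matrix.diagonal ![4, 4, 0, 0] ∧
    (heaQFIM θs).det = 0 := by
  intro θs
  have e0 : θs 0 = Real.pi / 4 := rfl
  have e1 : θs 1 = 0 := rfl
  have e2 : θs 2 = Real.pi / 4 := rfl
  have e3 : θs 3 = 0 := rfl
  have s2 : Real.sqrt 2 * Real.sqrt 2 = 2 := Real.mul_self_sqrt (by norm_num)
  have hAv : heaA θs = 1 / 2 := by
    simp only [heaA, e0, e1, e2, e3, Real.cos_pi_div_four, Real.sin_pi_div_four]
    norm_num
    nlinarith [s2]
  have hBv : heaB θs = -(1 / 2) := by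
    simp only [heaB, e0, e1, e2, e3, Real.cos_pi_div_four, Real.sin_pi_div_four]
    norm_num
    nlinarith [s2]
  have hCv : heaC θs = 1 / 2 := by
    simp only [heaC, e0, e1, e2, e3, Real.cos_pi_div_four, Real.sin_pi_div_four]
    norm_num
    nlinarith [s2]
  have hDv : heaD θs = 1 / 2 := by
    simp only [heaD, e0, e1, e2, e3, Real.cos_pi_div_four, Real.sin_pi_div_four]
    norm_num
    nlinarith [s2]
  have hA : HasFDerivAt heaA _ θs :=
    ((((heaHpj 0 θs).cos.mul (heaHpj 2 θs).cos).mul (((heaHpj 1 θs).add (heaHpj 3 θs)).cos)).sub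
      (((heaHpj 0 θs).sin.mul (heaHpj 2 θs).sin).mul (((heaHpj 1 θs).sub (heaHpj 3 θs)).sin)))
  have hB : HasFDerivAt heaB _ θs :=
    ((((heaHpj 0 θs).cos.mul (heaHpj 2 θs).cos).mul (((heaHpj 1 θs).add (heaHpj 3 θs)).sin)).sub
      (((heaHpj 0 θs).sin.mul (heaHpj 2 θs).sin).mul (((heaHpj 1 θs).sub (heaHpj 3 θs)).cos)))
  have hC : HasFDerivAt heaC _ θs :=
    ((((heaHpj 0 θs).cos.mul (heaHpj 2 θs).sin).mul (((heaHpj 1 θs).add (heaHpj 3 θs)).cos)).add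
      (((heaHpj 0 θs).sin.mul (heaHpj 2 θs).cos).mul (((heaHpj 1 θs).sub (heaHpj 3 θs)).sin)))
  have hD : HasFDerivAt heaD _ θs :=
    ((((heaHpj 0 θs).sin.mul (heaHpj 2 θs).cos).mul (((heaHpj 1 θs).sub (heaHpj 3 θs)).cos)).add
      (((heaHpj 0 θs).cos.mul (heaHpj 2 θs).sin).mul (((heaHpj 1 θs).add (heaHpj 3 θs)).sin)))
  rw [e0, e1, e2, e3] at hA hB hC hD
  have hX : HasFDerivAt heaX _ θs := hA.sq'.add hB.sq'
  have hZ : HasFDerivAt heaZ _ θs := ((hA.mul hC).add (hB.mul hD)).neg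
  rw [hAv, hBv] at hX
  rw [hAv, hBv, hCv, hDv] at hZ
  have hxv : heaX θs = 1 / 2 := by
    simp only [heaX, hAv, hBv]; norm_num
  have hzv : heaZ θs = 0 := by
    simp only [heaZ, hAv, hBv, hCv, hDv]; norm_num
  have px : ∀ i, pderiv4 heaX θs i = ![0, -1, 0, 0] i := by
    intro i
    rw [pderiv4, hX.fderiv]
    fin_cases i <;>
      · simp [heaPj, Pi.single_apply, e0, e1, e2, e3, Real.cos_pi_div_four, Real.sin_pi_div_four]
        try nlinarith [s2]
  have pz : ∀ i, pderiv4 heaZ θs i = ![1, 0, 0, 0] i := by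
    intro i
    rw [pderiv4, hZ.fderiv]
    fin_cases i <;>
      · simp [heaPj, Pi.single_apply, e0, e1, e2, e3, Real.cos_pi_div_four, Real.sin_pi_div_four]
        try nlinarith [s2]
  have hg : HasFDerivAt (𝕜 := ℝ) (fun t => heaX t * (1 - heaX t) - heaZ t ^ 2) 0 θs := by
    have h := (hX.mul ((hasFDerivAt_const (𝕜 := ℝ) (1 : ℝ) θs).sub hX)).sub hZ.sq'
    rw [hxv, hzv] at h
    norm_num at h
    refine h.congr_fderiv ?_
    simp only [hxv]
    module
  have hsd : HasDerivAt Real.sqrt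
      (1 / (2 * Real.sqrt (heaX θs * (1 - heaX θs) - heaZ θs ^ 2)))
      (heaX θs * (1 - heaX θs) - heaZ θs ^ 2) :=
    Real.hasDerivAt_sqrt (by rw [hxv, hzv]; norm_num)
  have hConc : HasFDerivAt (𝕜 := ℝ) heaConc 0 θs := by
    have h := (hsd.comp_hasFDerivAt θs hg).const_mul 2
    simp only [smul_zero] at h
    exact h
  have pc : ∀ i, pderiv4 heaConc θs i = 0 := by
    intro i
    rw [pderiv4, hConc.fderiv]
    simp
  have hQ : heaQFIM θs = Matrix.diagonal ![4, 4, 0, 0] := by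
    ext i j
    rw [heaQFIM, Matrix.of_apply, px, px, pz, pz, pc, pc]
    fin_cases i <;> fin_cases j <;> norm_num [Matrix.diagonal, Fin.ext_iff]
  refine ⟨hxv, hzv, ?_, hQ, ?_⟩
  · ext i j
    fin_cases i <;> fin_cases j <;>
      simp [hxv, hzv, Matrix.one_apply] <;> norm_num
  · rw [hQ, Matrix.det_diagonal]
    simp [Fin.prod_univ_four]
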